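/- Assume in addition that the map (s,x) ↦ T_s x is continuous on [0,∞) × X. Then for every nonempty compact K ⊆ X and every t₀ > 0, g(K) = sup_{ε>0} limsup_{t→∞} (1/t) log g_{t₀,t}(ε,K); that is, the topological entropy of K can be computed using the truncated dynamical balls B_{t₀}(·,t,ε) in place of B(·,t,ε). -/

import Mathlib

open Filter Set
open scoped Topology
open scoped ENNReal NNReal

variable {X : Type*} [MetricSpace X]

/-- The dynamical ball `B(x,t,ε)`. -/
def dynBall (T : ℝ → X → X) (x : X) (t ε : ℝ) : Set X :=
  {y | ∀ s ∈ Set.Icc 0 t, dist (T s y) (T s x) < ε}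

/-- The truncated dynamical ball `B_{t₀}(x,t,ε)`. -/
def truncBall (T : ℝ → X → X) (t₀ : ℝ) (x : X) (t ε : ℝ) : Set X :=
  {y | ∀ s ∈ Set.Icc t₀ t, dist (T s x) (T s y) < ε}

/-- `g_t(ε,K)`: minimal cardinality of a `(t,ε)`-generating set for `K`. -/
noncomputable def genCount (T : ℝ → X → X) (t ε : ℝ) (K : Set X) : ℕ∞ :=
  sInf {n : ℕ∞ | ∃ E : Set X, E.encard = n ∧ K ⊆ ⋃ x ∈ E, dynBall T x t ε}

/-- `g_{t₀,t}(ε,K)`: minimal cardinality of a cover of `K` by truncated dynamical balls. -/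
noncomputable def truncCount (T : ℝ → X → X) (t₀ t ε : ℝ) (K : Set X) : ℕ∞ :=
  sInf {n : ℕ∞ | ∃ E : Set X, E.encard = n ∧ K ⊆ ⋃ x ∈ E, truncBall T t₀ x t ε}

/-- `g(K) = sup_{ε>0} limsup_{t→∞} (1/t) log g_t(ε,K)`. -/
noncomputable def entg (T : ℝ → X → X) (K : Set X) : EReal :=
  ⨆ (ε : ℝ) (_ : 0 < ε),
    Filter.limsup (fun t : ℝ => ((t⁻¹ : ℝ) : EReal) * ENNReal.log ((genCount T t ε K : ℝ≥0∞)))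
      Filter.atTop

/-- Topological entropy `h_top(T) = sup { g(K) : K nonempty compact }`. -/
noncomputable def htop (T : ℝ → X → X) : EReal :=
  ⨆ (K : Set X) (_ : IsCompact K) (_ : K.Nonempty), entg T K

/-! ### Auxiliary lemmas -/

lemma my_encard_prod_le {α β : Type*} (s : Set α) (t : Set β) :
    (s ×ˢ t).encard ≤ s.encard * t.encard := by
  rcases s.eq_empty_or_nonempty with rfl | hs
  · simp
  rcases t.eq_empty_or_nonempty with rfl | ht
  · simp
  by_cases hsf : s.Finite
  · by_cases htf : t.Finite
    · have hp : (s ×ˢ t).Finite := hsf.prod htf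
      rw [hp.encard_eq_coe_toFinset_card, hsf.encard_eq_coe_toFinset_card,
        htf.encard_eq_coe_toFinset_card]
      have hsub : hp.toFinset ⊆ hsf.toFinset ×ˢ htf.toFinset := by
        intro p hp'
        simp only [Set.Finite.mem_toFinset, Set.mem_prod] at hp'
        simp [Finset.mem_product, Set.Finite.mem_toFinset, hp'.1, hp'.2]
      have := Finset.card_le_card hsub
      rw [Finset.card_product] at this
      exact_mod_cast this
    · rw [Set.Infinite.encard_eq htf,
        ENat.mul_top (by simpa [Set.encard_ne_zero] using hs.ne_empty)]
      exact le_top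
  · rw [Set.Infinite.encard_eq hsf,
      ENat.top_mul (by simpa [Set.encard_ne_zero] using ht.ne_empty)]
    exact le_top

lemma my_dynBall_mem_nhds (T : ℝ → X → X)
    (hT : ContinuousOn (fun p : ℝ × X => T p.1 p.2) (Set.Ici 0 ×ˢ Set.univ))
    (x : X) {t ε : ℝ} (hε : 0 < ε) : dynBall T x t ε ∈ 𝓝 x := by
  set T' : ℝ × X → X := fun p => T (max p.1 0) p.2 with hT'def
  have hg : Continuous (fun p : ℝ × X => ((max p.1 0, p.2) : ℝ × X)) := by fun_prop
  have hT' : Continuous T' := by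
    rw [← continuousOn_univ]
    exact hT.comp hg.continuousOn (fun p _ => by
      simp [Set.mem_prod, le_max_right])
  have key : ∀ᶠ z in 𝓝 x, ∀ s ∈ Set.Icc (0:ℝ) t, dist (T' (s, z)) (T' (s, x)) < ε := by
    apply (isCompact_Icc (a := (0:ℝ)) (b := t)).eventually_forall_of_forall_eventually
    intro s _
    have hf : Continuous fun z : X × ℝ => dist (T' (z.2, z.1)) (T' (z.2, x)) := by fun_prop
    exact (hf.continuousAt (x := (x, s))).eventually_lt continuousAt_const (by simpa using hε)
  refine Filter.mem_of_superset key ?_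
  intro z hz s hs
  have hmax : max s 0 = s := max_eq_left hs.1
  simpa [T', hmax] using hz s hs

lemma my_truncCount_le_genCount (T : ℝ → X → X) {t₀ : ℝ} (h0 : 0 ≤ t₀) (t ε : ℝ) (K : Set X) :
    truncCount T t₀ t ε K ≤ genCount T t ε K := by
  apply sInf_le_sInf
  rintro n ⟨E, hE, hcov⟩
  refine ⟨E, hE, hcov.trans (Set.iUnion₂_mono fun x _ => ?_)⟩
  intro y hy s hs
  rw [dist_comm]
  exact hy s ⟨le_trans h0 hs.1, hs.2⟩

lemma my_one_le_truncCount (T : ℝ → X → X) {K : Set X} (hne : K.Nonempty) (t₀ t ε : ℝ) :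
    1 ≤ truncCount T t₀ t ε K := by
  apply le_sInf
  rintro n ⟨E, rfl, hcov⟩
  rw [Set.one_le_encard_iff_nonempty]
  obtain ⟨y, hy⟩ := hne
  obtain ⟨x, hx, -⟩ := Set.mem_iUnion₂.1 (hcov hy)
  exact ⟨x, hx⟩

lemma my_genCount_le (T : ℝ → X → X) {K : Set X} (hne : K.Nonempty)
    {t₀ t ε : ℝ} (hε : 0 < ε) (F : Finset X)
    (hF : K ⊆ ⋃ x ∈ F, dynBall T x t₀ (ε/2)) :
    genCount T t ε K ≤ (F.card : ℕ∞) * truncCount T t₀ t (ε/2) K := by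
  have hS : {n : ℕ∞ | ∃ E : Set X,
      E.encard = n ∧ K ⊆ ⋃ x ∈ E, truncBall T t₀ x t (ε/2)}.Nonempty := by
    refine ⟨K.encard, K, rfl, fun y hy => ?_⟩
    exact Set.mem_biUnion hy (fun s _ => by simpa using half_pos hε)
  obtain ⟨E, hEcard, hEcov⟩ := csInf_mem hS
  rw [show truncCount T t₀ t (ε/2) K = sInf _ from rfl, ← hEcard]
  classical
  set φ : X × X → X := fun p =>
    if h : (K ∩ dynBall T p.1 t₀ (ε/2) ∩ truncBall T t₀ p.2 t (ε/2)).Nonempty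
    then h.some else hne.some with hφdef
  set E' : Set X := φ '' ((F : Set X) ×ˢ E) with hE'def
  have hcov : K ⊆ ⋃ x ∈ E', dynBall T x t ε := by
    intro y hy
    obtain ⟨f, hfF, hyf⟩ := Set.mem_iUnion₂.1 (hF hy)
    obtain ⟨e, heE, hye⟩ := Set.mem_iUnion₂.1 (hEcov hy)
    have hint : (K ∩ dynBall T f t₀ (ε/2) ∩ truncBall T t₀ e t (ε/2)).Nonempty :=
      ⟨y, ⟨⟨hy, hyf⟩, hye⟩⟩
    have hz : φ (f, e) ∈ K ∩ dynBall T f t₀ (ε/2) ∩ truncBall T t₀ e t (ε/2) := by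
      rw [hφdef]
      simp only [dif_pos hint]
      exact hint.some_mem
    have hzE' : φ (f, e) ∈ E' := ⟨(f, e), ⟨hfF, heE⟩, rfl⟩
    refine Set.mem_biUnion hzE' ?_
    intro s hs
    rcases le_or_gt s t₀ with h1 | h2
    · have dy := hyf s ⟨hs.1, h1⟩
      have dz := hz.1.2 s ⟨hs.1, h1⟩
      have := dist_triangle_right (T s y) (T s (φ (f, e))) (T s f)
      linarith
    · have dy := hye s ⟨h2.le, hs.2⟩
      have dz := hz.2 s ⟨h2.le, hs.2⟩
      rw [dist_comm] at dy
      have := dist_triangle (T s y) (T s e) (T s (φ (f, e)))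
      linarith
  calc genCount T t ε K ≤ E'.encard := sInf_le ⟨E', rfl, hcov⟩
    _ ≤ ((F : Set X) ×ˢ E).encard := Set.encard_image_le _ _
    _ ≤ (F : Set X).encard * E.encard := my_encard_prod_le _ _
    _ = (F.card : ℕ∞) * E.encard := by rw [Set.encard_coe_eq_coe_finsetCard]

theorem stmt3 (T : ℝ → X → X)
    (hT : ContinuousOn (fun p : ℝ × X => T p.1 p.2) (Set.Ici 0 ×ˢ Set.univ))
    (K : Set X) (hK : IsCompact K) (hne : K.Nonempty) (t₀ : ℝ) (ht₀ : 0 < t₀) :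
    entg T K =
      ⨆ (ε : ℝ) (_ : 0 < ε),
        Filter.limsup
          (fun t : ℝ => ((t⁻¹ : ℝ) : EReal) * ENNReal.log ((truncCount T t₀ t ε K : ℝ≥0∞)))
          Filter.atTop := by
  have htrunc1 : ∀ t ε : ℝ, (1 : ℝ≥0∞) ≤ ((truncCount T t₀ t ε K : ℝ≥0∞)) := fun t ε => by
    rw [← ENat.toENNReal_one, ENat.toENNReal_le]
    exact my_one_le_truncCount T hne t₀ t ε
  apply le_antisymm
  · rw [entg]
    refine iSup₂_le fun ε hε => ?_
    obtain ⟨F, hFK, hFcov⟩ := hK.elim_nhds_subcover (fun x => dynBall T x t₀ (ε/2))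
      (fun x _ => my_dynBall_mem_nhds T hT x (half_pos hε))
    have hFne : F.Nonempty := by
      obtain ⟨y, hy⟩ := hne
      obtain ⟨x, hx, -⟩ := Set.mem_iUnion₂.1 (hFcov hy)
      exact ⟨x, hx⟩
    set C : ℝ≥0∞ := ((F.card : ℕ∞) : ℝ≥0∞) with hCdef
    have hC1 : (1 : ℝ≥0∞) ≤ C := by
      rw [hCdef, ← ENat.toENNReal_one, ENat.toENNReal_le]
      exact_mod_cast Finset.card_pos.2 hFne
    have hCne0 : C ≠ 0 := by intro h; rw [h] at hC1; simp at hC1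
    have hCtop : C ≠ ⊤ := by
      rw [hCdef]
      simp [ENat.toENNReal_coe]
    set r : ℝ := (ENNReal.log C).toReal with hrdef
    have hlogC : (r : EReal) = ENNReal.log C :=
      EReal.coe_toReal (by simp [hCtop]) (by simp [hCne0])
    have hlogC0 : (0 : EReal) ≤ ENNReal.log C := ENNReal.zero_le_log_iff.2 hC1
    set w : ℝ → EReal := fun t => ((t⁻¹ : ℝ) : EReal) * (r : EReal) with hwdef
    set v : ℝ → EReal := fun t =>
      ((t⁻¹ : ℝ) : EReal) * ENNReal.log ((truncCount T t₀ t (ε/2) K : ℝ≥0∞)) with hvdef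
    have hpt : ∀ t : ℝ, ENNReal.log ((genCount T t ε K : ℝ≥0∞)) ≤
        ENNReal.log C + ENNReal.log ((truncCount T t₀ t (ε/2) K : ℝ≥0∞)) := by
      intro t
      rw [← ENNReal.log_mul_add]
      apply ENNReal.log_monotone
      calc (genCount T t ε K : ℝ≥0∞)
          ≤ (((F.card : ℕ∞) * truncCount T t₀ t (ε/2) K : ℕ∞) : ℝ≥0∞) :=
            ENat.toENNReal_le.2 (my_genCount_le T hne hε F hFcov)
        _ = C * ((truncCount T t₀ t (ε/2) K : ℝ≥0∞)) := by rw [ENat.toENNReal_mul]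
    have hev : ∀ᶠ t : ℝ in atTop,
        ((t⁻¹ : ℝ) : EReal) * ENNReal.log ((genCount T t ε K : ℝ≥0∞)) ≤ (w + v) t := by
      filter_upwards [eventually_ge_atTop (1 : ℝ)] with t ht
      have ht0 : (0 : ℝ) ≤ t⁻¹ := inv_nonneg.2 (le_trans zero_le_one ht)
      have hcoe : (0 : EReal) ≤ ((t⁻¹ : ℝ) : EReal) := by exact_mod_cast ht0
      have hlogt0 : (0 : EReal) ≤ ENNReal.log ((truncCount T t₀ t (ε/2) K : ℝ≥0∞)) :=
        ENNReal.zero_le_log_iff.2 (htrunc1 t (ε/2))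
      calc ((t⁻¹ : ℝ) : EReal) * ENNReal.log ((genCount T t ε K : ℝ≥0∞))
          ≤ ((t⁻¹ : ℝ) : EReal) *
            (ENNReal.log C + ENNReal.log ((truncCount T t₀ t (ε/2) K : ℝ≥0∞))) :=
            mul_le_mul_of_nonneg_left (hpt t) hcoe
        _ = ((t⁻¹ : ℝ) : EReal) * ENNReal.log C +
            ((t⁻¹ : ℝ) : EReal) * ENNReal.log ((truncCount T t₀ t (ε/2) K : ℝ≥0∞)) :=
            EReal.left_distrib_of_nonneg hlogC0 hlogt0
        _ = (w + v) t := by rw [Pi.add_apply, hwdef, hvdef, hlogC]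
    have hw : Tendsto w atTop (𝓝 (0 : EReal)) := by
      have h1 : Tendsto (fun t : ℝ => t⁻¹ * r) atTop (𝓝 0) := by
        simpa using tendsto_inv_atTop_zero.mul_const r
      have h2 := EReal.tendsto_coe (m := fun t : ℝ => t⁻¹ * r) (a := (0 : ℝ)) |>.2 h1
      simpa [hwdef, EReal.coe_mul] using h2
    have hwls : limsup w atTop = 0 := hw.limsup_eq
    calc limsup (fun t : ℝ =>
          ((t⁻¹ : ℝ) : EReal) * ENNReal.log ((genCount T t ε K : ℝ≥0∞))) atTop
        ≤ limsup (w + v) atTop := limsup_le_limsup hev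
      _ ≤ limsup w atTop + limsup v atTop :=
          EReal.limsup_add_le (by rw [hwls]; exact Or.inl (by simp))
            (by rw [hwls]; exact Or.inl (by simp))
      _ = limsup v atTop := by rw [hwls, zero_add]
      _ ≤ _ := le_iSup₂ (f := fun (ε' : ℝ) (_ : 0 < ε') => limsup (fun t : ℝ =>
          ((t⁻¹ : ℝ) : EReal) * ENNReal.log ((truncCount T t₀ t ε' K : ℝ≥0∞))) atTop)
          (ε/2) (half_pos hε)
  · refine iSup₂_le fun ε hε => ?_
    have hev : ∀ᶠ t : ℝ in atTop,
        ((t⁻¹ : ℝ) : EReal) * ENNReal.log ((truncCount T t₀ t ε K : ℝ≥0∞)) ≤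
        ((t⁻¹ : ℝ) : EReal) * ENNReal.log ((genCount T t ε K : ℝ≥0∞)) := by
      filter_upwards [eventually_ge_atTop (1 : ℝ)] with t ht
      have ht0 : (0 : ℝ) ≤ t⁻¹ := inv_nonneg.2 (le_trans zero_le_one ht)
      have hcoe : (0 : EReal) ≤ ((t⁻¹ : ℝ) : EReal) := by exact_mod_cast ht0
      refine mul_le_mul_of_nonneg_left ?_ hcoe
      exact ENNReal.log_monotone
        (ENat.toENNReal_le.2 (my_truncCount_le_genCount T ht₀.le t ε K))
    calc limsup (fun t : ℝ =>
          ((t⁻¹ : ℝ) : EReal) * ENNReal.log ((truncCount T t₀ t ε K : ℝ≥0∞))) atTop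
        ≤ limsup (fun t : ℝ =>
          ((t⁻¹ : ℝ) : EReal) * ENNReal.log ((genCount T t ε K : ℝ≥0∞))) atTop :=
          limsup_le_limsup hev
      _ ≤ entg T K := by
          rw [entg]
          exact le_iSup₂ (f := fun (ε' : ℝ) (_ : 0 < ε') => limsup (fun t : ℝ =>
            ((t⁻¹ : ℝ) : EReal) * ENNReal.log ((genCount T t ε' K : ℝ≥0∞))) atTop) ε hε
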